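/- arXiv:1810.08075 — 8 statements merged into one kernel-verified Lean document; each statement's English description precedes it below -/
import Mathlib

section
/- Let R be a ring and Δ ⊆ ℕ^p a non-empty co-ideal. If r = Σ_α r_α s^α ∈ R[[s]]_Δ has r_0 = 1, then its multiplicative inverse r* = Σ_α r*_α s^α is given by r*_0 = 1 and, for α ≠ 0, r*_α = Σ_{d=1}^{|α|} (-1)^d Σ_{(α^1,...,α^d) ∈ Par(α,d)} r_{α^1} ⋯ r_{α^d}, where Par(α,d) is the set of d-tuples of nonzero elements of ℕ^p summing to α. -/
open scoped Classical

def IsCoideal {p : ℕ} (Δ : Set (Fin p →₀ ℕ)) : Prop :=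
  Δ.Nonempty ∧ ∀ α ∈ Δ, ∀ β ≤ α, β ∈ Δ

def EqOnD {p : ℕ} {R : Type*} [Ring R] (Δ : Set (Fin p →₀ ℕ))
    (f g : MvPowerSeries (Fin p) R) : Prop :=
  ∀ α ∈ Δ, MvPowerSeries.coeff α f = MvPowerSeries.coeff α g

/-- `Par α d`: the set of `d`-tuples `(α^1, …, α^d)` of nonzero elements of `ℕ^p`
with `α^1 + ⋯ + α^d = α`. -/
noncomputable def Par {p : ℕ} (α : Fin p →₀ ℕ) (d : ℕ) :
    Finset (Fin d → (Fin p →₀ ℕ)) :=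
  (Fintype.piFinset (fun _ : Fin d => Finset.Iic α)).filter
    (fun f => (∀ i, f i ≠ 0) ∧ ∑ i, f i = α)

section Aux

variable {p : ℕ} {R : Type*} [Ring R]

lemma mem_Par {α : Fin p →₀ ℕ} {d : ℕ} {f : Fin d → (Fin p →₀ ℕ)} :
    f ∈ Par α d ↔ (∀ i, f i ≠ 0) ∧ ∑ i, f i = α := by
  simp only [Par, Finset.mem_filter, Fintype.mem_piFinset, Finset.mem_Iic]
  constructor
  · rintro ⟨-, h⟩; exact h
  · rintro ⟨h1, h2⟩
    refine ⟨fun i => h2 ▸ ?_, h1, h2⟩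
    exact Finset.single_le_sum (fun j _ => zero_le) (Finset.mem_univ i)

/-- total degree -/
def w {p : ℕ} (α : Fin p →₀ ℕ) : ℕ := ∑ i, α i

lemma w_add (α β : Fin p →₀ ℕ) : w (α + β) = w α + w β := by
  simp [w, Finsupp.add_apply, Finset.sum_add_distrib]

lemma w_eq_zero {α : Fin p →₀ ℕ} (h : w α = 0) : α = 0 := by
  ext i
  have := Finset.sum_eq_zero_iff.mp h i (Finset.mem_univ i)
  simpa using this

lemma one_le_w {α : Fin p →₀ ℕ} (h : α ≠ 0) : 1 ≤ w α := by
  rcases Nat.eq_zero_or_pos (w α) with h0 | h0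
  · exact absurd (w_eq_zero h0) h
  · exact h0

lemma w_sum {d : ℕ} (f : Fin d → (Fin p →₀ ℕ)) : w (∑ i, f i) = ∑ i, w (f i) := by
  simp only [w, Finsupp.finset_sum_apply]
  exact Finset.sum_comm

lemma Par_eq_empty_of_lt {α : Fin p →₀ ℕ} {d : ℕ} (h : w α < d) : Par α d = ∅ := by
  rw [Finset.eq_empty_iff_forall_notMem]
  intro f hf
  rw [mem_Par] at hf
  have : d ≤ w α := by
    calc d = ∑ _i : Fin d, 1 := by simp
    _ ≤ ∑ i, w (f i) := Finset.sum_le_sum fun i _ => one_le_w (hf.1 i)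
    _ = w α := by rw [← w_sum, hf.2]
  omega

lemma Par_zero_zero : Par (0 : Fin p →₀ ℕ) 0 = {fun i => Fin.elim0 i} := by
  ext f
  simp [mem_Par, Finset.mem_singleton]
  funext i
  exact i.elim0

lemma Par_pos_zero {α : Fin p →₀ ℕ} (h : α ≠ 0) : Par α 0 = ∅ := by
  rw [Finset.eq_empty_iff_forall_notMem]
  intro f hf
  rw [mem_Par] at hf
  exact h (hf.2.symm.trans (Finset.sum_of_isEmpty _))

noncomputable def G (r : MvPowerSeries (Fin p) R) (α : Fin p →₀ ℕ) (d : ℕ) : R :=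
  ∑ f ∈ Par α d, (List.ofFn fun i => MvPowerSeries.coeff (f i) r).prod

noncomputable def F (r : MvPowerSeries (Fin p) R) (α : Fin p →₀ ℕ) : R :=
  if α = 0 then 1 else ∑ d ∈ Finset.Icc 1 (w α), (-1 : R) ^ d * G r α d

lemma G_zero_zero (r : MvPowerSeries (Fin p) R) : G r (0 : Fin p →₀ ℕ) 0 = 1 := by
  simp [G, Par_zero_zero, List.ofFn_zero]

lemma G_eq_zero_of_lt (r : MvPowerSeries (Fin p) R) {α : Fin p →₀ ℕ} {d : ℕ}
    (h : w α < d) : G r α d = 0 := by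
  simp [G, Par_eq_empty_of_lt h]

lemma G_pos_zero (r : MvPowerSeries (Fin p) R) {α : Fin p →₀ ℕ} (h : α ≠ 0) :
    G r α 0 = 0 := by
  simp [G, Par_pos_zero h]

/-- Peeling recurrence for `G`. -/
lemma G_succ (r : MvPowerSeries (Fin p) R) (α : Fin p →₀ ℕ) (d : ℕ) :
    G r α (d + 1) =
      ∑ b ∈ (Finset.HasAntidiagonal.antidiagonal α).erase (0, α),
        MvPowerSeries.coeff b.1 r * G r b.2 d := by
  classical
  rw [G]
  simp only [G, Finset.mul_sum]
  rw [Finset.sum_sigma']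
  refine Finset.sum_bij' (fun f _ => ⟨(f 0, ∑ i : Fin d, f i.succ), Fin.tail f⟩)
    (fun x _ => Fin.cons x.1.1 x.2) ?_ ?_ ?_ ?_ ?_
  · intro f hf
    rw [mem_Par] at hf
    simp only [Finset.mem_sigma, Finset.mem_erase, Finset.HasAntidiagonal.mem_antidiagonal]
    refine ⟨⟨?_, ?_⟩, ?_⟩
    · intro h
      exact hf.1 0 (congrArg Prod.fst h)
    · rw [← hf.2, Fin.sum_univ_succ]
    · rw [mem_Par]
      exact ⟨fun i => hf.1 i.succ, rfl⟩
  · intro x hx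
    simp only [Finset.mem_sigma, Finset.mem_erase, Finset.HasAntidiagonal.mem_antidiagonal] at hx
    obtain ⟨⟨hne, hsum⟩, hpar⟩ := hx
    rw [mem_Par] at hpar ⊢
    constructor
    · intro i
      refine Fin.cases ?_ ?_ i
      · simpa using fun h => hne (by cases x with | mk a b => cases a; simp_all)
      · intro j; simpa using hpar.1 j
    · rw [Fin.sum_univ_succ]
      simp [hpar.2, hsum]
  · intro f hf
    simp [Fin.cons_self_tail]
  · intro x hx
    simp only [Finset.mem_sigma, Finset.mem_erase, Finset.HasAntidiagonal.mem_antidiagonal] at hx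
    obtain ⟨⟨hne, hsum⟩, hpar⟩ := hx
    rw [mem_Par] at hpar
    cases x with
    | mk a b =>
      cases a with
      | mk a1 a2 =>
        simp only [Fin.cons_zero, Fin.tail_cons]
        congr 1
        simp [hpar.2]
  · intro f hf
    rw [mem_Par] at hf
    rw [List.ofFn_succ, List.prod_cons]
    rfl

end Aux
lemma neg_pow_mul_comm {R : Type*} [Ring R] (i : ℕ) (a b : R) :
    (-1 : R) ^ i * (a * b) = a * ((-1 : R) ^ i * b) := by
  rcases Nat.even_or_odd i with h | h
  · rw [h.neg_one_pow, one_mul, one_mul]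
  · rw [h.neg_one_pow, neg_one_mul, neg_one_mul, mul_neg]

section Aux2
variable {p : ℕ} {R : Type*} [Ring R]

lemma F_rec (r : MvPowerSeries (Fin p) R) {α : Fin p →₀ ℕ} (hα : α ≠ 0) :
    F r α = -∑ b ∈ (Finset.HasAntidiagonal.antidiagonal α).erase (0, α),
      MvPowerSeries.coeff b.1 r * F r b.2 := by
  have hN : 1 ≤ w α := one_le_w hα
  have key : ∀ b ∈ (Finset.HasAntidiagonal.antidiagonal α).erase (0, α),
      ∑ i ∈ Finset.range (w α), (-1 : R) ^ i * G r b.2 i = F r b.2 := by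
    intro b hb
    simp only [Finset.mem_erase, Finset.HasAntidiagonal.mem_antidiagonal] at hb
    have hb1 : b.1 ≠ 0 := fun h =>
      hb.1 (Prod.ext h (by rw [← hb.2, h, zero_add]))
    have hw : w b.2 < w α := by
      have h1 := w_add b.1 b.2
      rw [hb.2] at h1
      have h2 := one_le_w hb1
      omega
    by_cases h2 : b.2 = 0
    · rw [h2]
      rw [F, if_pos rfl, Finset.sum_eq_single 0]
      · simp [G_zero_zero]
      · intro i _ hi
        rw [G_eq_zero_of_lt r (by simpa [w] using Nat.pos_of_ne_zero hi), mul_zero]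
      · intro h; exact absurd (Finset.mem_range.mpr (by omega)) h
    · rw [F, if_neg h2]
      refine (Finset.sum_subset ?_ ?_).symm
      · intro d hd
        rw [Finset.mem_Icc] at hd
        exact Finset.mem_range.mpr (by omega)
      · intro d _ hd
        rw [Finset.mem_Icc, not_and_or] at hd
        rcases hd with hd | hd
        · have : d = 0 := by omega
          subst this
          rw [G_pos_zero r h2, mul_zero]
        · rw [G_eq_zero_of_lt r (by omega), mul_zero]
  rw [F, if_neg hα, ← Finset.Ico_add_one_right_eq_Icc, Finset.sum_Ico_eq_sum_range]
  have hcN : w α + 1 - 1 = w α := by omega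
  rw [hcN]
  calc ∑ i ∈ Finset.range (w α), (-1 : R) ^ (1 + i) * G r α (1 + i)
      = ∑ i ∈ Finset.range (w α),
          -(∑ b ∈ (Finset.HasAntidiagonal.antidiagonal α).erase (0, α),
            MvPowerSeries.coeff b.1 r * ((-1 : R) ^ i * G r b.2 i)) := by
        refine Finset.sum_congr rfl fun i _ => ?_
        rw [add_comm 1 i, G_succ, pow_succ, mul_assoc, neg_one_mul, mul_neg,
          Finset.mul_sum]
        congr 1
        exact Finset.sum_congr rfl fun b _ => neg_pow_mul_comm i _ _
    _ = -∑ b ∈ (Finset.HasAntidiagonal.antidiagonal α).erase (0, α),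
          MvPowerSeries.coeff b.1 r *
            ∑ i ∈ Finset.range (w α), (-1 : R) ^ i * G r b.2 i := by
        rw [Finset.sum_neg_distrib, Finset.sum_comm]
        congr 1
        exact Finset.sum_congr rfl fun b _ => (Finset.mul_sum _ _ _).symm
    _ = -∑ b ∈ (Finset.HasAntidiagonal.antidiagonal α).erase (0, α),
          MvPowerSeries.coeff b.1 r * F r b.2 := by
        congr 1
        exact Finset.sum_congr rfl fun b hb => by rw [key b hb]

end Aux2


/-- If `r ∈ R[[s]]_Δ` has constant term `1` and `rs` is its (two-sided) inverse in
`R[[s]]_Δ`, then `rs` has constant term `1` and for `α ≠ 0`,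
`rs_α = Σ_{d=1}^{|α|} (-1)^d Σ_{(α^1,…,α^d) ∈ Par(α,d)} r_{α^1} ⋯ r_{α^d}`. -/
theorem inverse_coeff_formula {p : ℕ} {R : Type*} [Ring R]
    (Δ : Set (Fin p →₀ ℕ)) (hΔ : IsCoideal Δ)
    (r rs : MvPowerSeries (Fin p) R)
    (hr0 : MvPowerSeries.coeff 0 r = 1)
    (h1 : EqOnD Δ (r * rs) 1) (h2 : EqOnD Δ (rs * r) 1) :
    MvPowerSeries.coeff 0 rs = 1 ∧
      ∀ α ∈ Δ, α ≠ 0 →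
        MvPowerSeries.coeff α rs =
          ∑ d ∈ Finset.Icc 1 (∑ i, α i),
            (-1 : R) ^ d *
              ∑ f ∈ Par α d, (List.ofFn fun i => MvPowerSeries.coeff (f i) r).prod := by
  have h0Δ : (0 : Fin p →₀ ℕ) ∈ Δ := by
    obtain ⟨⟨β, hβ⟩, hcl⟩ := hΔ
    exact hcl β hβ 0 zero_le
  have hrs0 : MvPowerSeries.coeff 0 rs = 1 := by
    have h := h1 0 h0Δ
    rw [MvPowerSeries.coeff_mul, Finsupp.antidiagonal_zero, Finset.sum_singleton,
      hr0, one_mul, MvPowerSeries.coeff_one, if_pos rfl] at h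
    exact h
  have hrec : ∀ α ∈ Δ, α ≠ 0 → MvPowerSeries.coeff α rs =
      -∑ b ∈ (Finset.HasAntidiagonal.antidiagonal α).erase (0, α),
        MvPowerSeries.coeff b.1 r * MvPowerSeries.coeff b.2 rs := by
    intro α hαΔ hα
    have h := h1 α hαΔ
    rw [MvPowerSeries.coeff_mul, MvPowerSeries.coeff_one, if_neg hα,
      ← Finset.add_sum_erase _ _
        (show ((0 : Fin p →₀ ℕ), α) ∈ Finset.HasAntidiagonal.antidiagonal α from
          Finset.HasAntidiagonal.mem_antidiagonal.mpr (zero_add α)),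
      hr0, one_mul] at h
    exact eq_neg_of_add_eq_zero_left h
  have main : ∀ n, ∀ α ∈ Δ, w α ≤ n → MvPowerSeries.coeff α rs = F r α := by
    intro n
    induction n with
    | zero =>
      intro α hαΔ hw
      have hα0 : α = 0 := w_eq_zero (Nat.le_zero.mp hw)
      subst hα0
      rw [hrs0, F, if_pos rfl]
    | succ n ih =>
      intro α hαΔ hw
      by_cases hα : α = 0
      · subst hα
        rw [hrs0, F, if_pos rfl]
      · rw [hrec α hαΔ hα, F_rec r hα]
        congr 1
        refine Finset.sum_congr rfl fun b hb => ?_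
        simp only [Finset.mem_erase, Finset.HasAntidiagonal.mem_antidiagonal] at hb
        have hb1 : b.1 ≠ 0 := fun h =>
          hb.1 (Prod.ext h (by rw [← hb.2, h, zero_add]))
        have hb2Δ : b.2 ∈ Δ := hΔ.2 α hαΔ b.2 (hb.2 ▸ le_add_self)
        have hwb : w b.2 ≤ n := by
          have h1 := w_add b.1 b.2
          rw [hb.2] at h1
          have h2 := one_le_w hb1
          omega
        rw [ih b.2 hb2Δ hwb]
  refine ⟨hrs0, fun α hαΔ hα => ?_⟩
  rw [main (w α) α hαΔ le_rfl, F, if_neg hα]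
  rfl
end

section
/- Let 𝔡, 𝔡' be k-derivations of k[[s]]_Δ and r ∈ U^p(R;Δ). Then ε^{[𝔡,𝔡']}(r) = [ε^𝔡(r), ε^{𝔡'}(r)] + 𝔡_R(ε^{𝔡'}(r)) − 𝔡'_R(ε^𝔡(r)), where [·,·] denotes the commutator. -/
section Aux

variable {p : ℕ} {R : Type*} [Ring R] {Δ : Set (Fin p →₀ ℕ)}

lemma eqD_refl (f : MvPowerSeries (Fin p) R) : EqOnD Δ f f := fun _ _ => rfl

lemma eqD_of_eq {f g : MvPowerSeries (Fin p) R} (h : f = g) : EqOnD Δ f g :=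
  h ▸ eqD_refl f

lemma eqD_symm {f g : MvPowerSeries (Fin p) R} (h : EqOnD Δ f g) : EqOnD Δ g f :=
  fun α hα => (h α hα).symm

lemma eqD_trans {f g h : MvPowerSeries (Fin p) R} (h1 : EqOnD Δ f g) (h2 : EqOnD Δ g h) :
    EqOnD Δ f h := fun α hα => (h1 α hα).trans (h2 α hα)

lemma eqD_add {f f' g g' : MvPowerSeries (Fin p) R} (h1 : EqOnD Δ f f') (h2 : EqOnD Δ g g') :
    EqOnD Δ (f + g) (f' + g') := fun α hα => by
  simp only [map_add, h1 α hα, h2 α hα]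

lemma eqD_sub {f f' g g' : MvPowerSeries (Fin p) R} (h1 : EqOnD Δ f f') (h2 : EqOnD Δ g g') :
    EqOnD Δ (f - g) (f' - g') := fun α hα => by
  simp only [map_sub, h1 α hα, h2 α hα]

lemma eqD_mul (hΔ : IsCoideal Δ) {f f' g g' : MvPowerSeries (Fin p) R}
    (h1 : EqOnD Δ f f') (h2 : EqOnD Δ g g') :
    EqOnD Δ (f * g) (f' * g') := by
  intro α hα
  rw [MvPowerSeries.coeff_mul, MvPowerSeries.coeff_mul]
  refine Finset.sum_congr rfl fun x hx => ?_
  replace hx : x.1 + x.2 = α := Finset.HasAntidiagonal.mem_antidiagonal.mp hx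
  have hb : x.1 ∈ Δ := hΔ.2 α hα x.1 (hx ▸ le_add_of_nonneg_right zero_le)
  have hc : x.2 ∈ Δ := hΔ.2 α hα x.2 (hx ▸ le_add_of_nonneg_left zero_le)
  rw [h1 x.1 hb, h2 x.2 hc]

end Aux

/-- For `k`-derivations `𝔡, 𝔡'` of `k[[s]]_Δ` (modelled by their induced maps `d, d'` on
`R[[s]]_Δ`) and `r ∈ U^p(R;Δ)` with inverse `rs`:
`ε^{[𝔡,𝔡']}(r) = [ε^𝔡(r), ε^{𝔡'}(r)] + 𝔡_R(ε^{𝔡'}(r)) − 𝔡'_R(ε^𝔡(r))`,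
where `ε^𝔡(r) = r* 𝔡_R(r)` and `[𝔡,𝔡'] = 𝔡∘𝔡' − 𝔡'∘𝔡`. -/
theorem eps_commutator {p : ℕ} {k R : Type*} [CommRing k] [Ring R] [Algebra k R]
    (Δ : Set (Fin p →₀ ℕ)) (hΔ : IsCoideal Δ)
    (d d' : MvPowerSeries (Fin p) R → MvPowerSeries (Fin p) R)
    (hadd : ∀ f g, d (f + g) = d f + d g)
    (hadd' : ∀ f g, d' (f + g) = d' f + d' g)
    (hleib : ∀ f g, EqOnD Δ (d (f * g)) (d f * g + f * d g))
    (hleib' : ∀ f g, EqOnD Δ (d' (f * g)) (d' f * g + f * d' g))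
    (hcong : ∀ f g, EqOnD Δ f g → EqOnD Δ (d f) (d g))
    (hcong' : ∀ f g, EqOnD Δ f g → EqOnD Δ (d' f) (d' g))
    (r rs : MvPowerSeries (Fin p) R)
    (hr0 : MvPowerSeries.coeff 0 r = 1)
    (hr1 : EqOnD Δ (r * rs) 1) (hr2 : EqOnD Δ (rs * r) 1) :
    EqOnD Δ (rs * (d (d' r) - d' (d r)))
      ((rs * d r) * (rs * d' r) - (rs * d' r) * (rs * d r)
        + d (rs * d' r) - d' (rs * d r)) := by
  -- `d 1 ≡ 0` and `d' 1 ≡ 0` on `Δ`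
  have h0 : EqOnD Δ (d 1) 0 := by
    have a := hleib 1 1
    simp only [mul_one, one_mul] at a
    intro α hα
    have := a α hα
    rw [map_add] at this
    rw [map_zero]
    exact left_eq_add.mp this
  have h0' : EqOnD Δ (d' 1) 0 := by
    have a := hleib' 1 1
    simp only [mul_one, one_mul] at a
    intro α hα
    have := a α hα
    rw [map_add] at this
    rw [map_zero]
    exact left_eq_add.mp this
  -- `d rs * r ≡ -(rs * d r)`
  have hdrsr : EqOnD Δ (d rs * r) (-(rs * d r)) := by
    have hsum : EqOnD Δ (d rs * r + rs * d r) 0 :=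
      eqD_trans (eqD_symm (hleib rs r)) (eqD_trans (hcong _ _ hr2) h0)
    have b := eqD_sub hsum (eqD_refl (rs * d r))
    rwa [add_sub_cancel_right, zero_sub] at b
  have hdrsr' : EqOnD Δ (d' rs * r) (-(rs * d' r)) := by
    have hsum : EqOnD Δ (d' rs * r + rs * d' r) 0 :=
      eqD_trans (eqD_symm (hleib' rs r)) (eqD_trans (hcong' _ _ hr2) h0')
    have b := eqD_sub hsum (eqD_refl (rs * d' r))
    rwa [add_sub_cancel_right, zero_sub] at b
  -- `d rs ≡ -(rs * d r * rs)`
  have hdrs : EqOnD Δ (d rs) (-(rs * d r * rs)) := by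
    have c : EqOnD Δ (d rs * r * rs) (-(rs * d r) * rs) := eqD_mul hΔ hdrsr (eqD_refl rs)
    have c' : EqOnD Δ (d rs * (r * rs)) (d rs * 1) := eqD_mul hΔ (eqD_refl (d rs)) hr1
    refine eqD_trans (eqD_of_eq (mul_one (d rs)).symm)
      (eqD_trans (eqD_symm c') (eqD_trans (eqD_of_eq (mul_assoc (d rs) r rs).symm)
      (eqD_trans c (eqD_of_eq (by noncomm_ring)))))
  have hdrs' : EqOnD Δ (d' rs) (-(rs * d' r * rs)) := by
    have c : EqOnD Δ (d' rs * r * rs) (-(rs * d' r) * rs) := eqD_mul hΔ hdrsr' (eqD_refl rs)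
    have c' : EqOnD Δ (d' rs * (r * rs)) (d' rs * 1) := eqD_mul hΔ (eqD_refl (d' rs)) hr1
    refine eqD_trans (eqD_of_eq (mul_one (d' rs)).symm)
      (eqD_trans (eqD_symm c') (eqD_trans (eqD_of_eq (mul_assoc (d' rs) r rs).symm)
      (eqD_trans c (eqD_of_eq (by noncomm_ring)))))
  -- expand the two outer derivative terms
  have term3 : EqOnD Δ (d (rs * d' r)) (-(rs * d r * rs) * d' r + rs * d (d' r)) :=
    eqD_trans (hleib rs (d' r)) (eqD_add (eqD_mul hΔ hdrs (eqD_refl _)) (eqD_refl _))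
  have term4 : EqOnD Δ (d' (rs * d r)) (-(rs * d' r * rs) * d r + rs * d' (d r)) :=
    eqD_trans (hleib' rs (d r)) (eqD_add (eqD_mul hΔ hdrs' (eqD_refl _)) (eqD_refl _))
  refine eqD_symm (eqD_trans (eqD_sub (eqD_add (eqD_refl _) term3) term4)
    (eqD_of_eq ?_))
  noncomm_ring
end

section
/- Let r ∈ U^p(R;Δ) and write ε^i(r) = Σ_α ε^i_α(r) s^α. Then for all α ∈ Δ with α_i > 0 the recursive identity α_i r_α = Σ_{β+γ=α, γ_i>0} r_β ε^i_γ(r) holds, and symmetrically α_i r_α = Σ_{β+γ=α, γ_i>0} ε̄^i_γ(r) r_β for the conjugate version ε̄^i(r) = χ^i_R(r) r*. -/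
/-- The `i`-th partial Euler derivation `χ^i = s_i ∂/∂s_i`. -/
noncomputable def chi {p : ℕ} {R : Type*} [Ring R] (i : Fin p)
    (f : MvPowerSeries (Fin p) R) : MvPowerSeries (Fin p) R :=
  fun α => (α i) • MvPowerSeries.coeff α f

lemma coeff_chi {p : ℕ} {R : Type*} [Ring R] (i : Fin p)
    (f : MvPowerSeries (Fin p) R) (β : Fin p →₀ ℕ) :
    MvPowerSeries.coeff β (chi i f) = (β i) • MvPowerSeries.coeff β f := rfl

/-- For `r ∈ U^p(R;Δ)` with inverse `rs`, `ε^i(r) = r* χ^i_R(r)` and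
`ε̄^i(r) = χ^i_R(r) r*`, one has, for `α ∈ Δ` with `α_i > 0`:
`α_i r_α = Σ_{β+γ=α, γ_i>0} r_β ε^i_γ(r) = Σ_{β+γ=α, γ_i>0} ε̄^i_γ(r) r_β`. -/
theorem eps_recursive {p : ℕ} {k R : Type*} [CommRing k] [Ring R] [Algebra k R]
    (Δ : Set (Fin p →₀ ℕ)) (hΔ : IsCoideal Δ)
    (r rs : MvPowerSeries (Fin p) R)
    (hr0 : MvPowerSeries.coeff 0 r = 1)
    (hr1 : EqOnD Δ (r * rs) 1) (hr2 : EqOnD Δ (rs * r) 1)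
    (i : Fin p) :
    ∀ α ∈ Δ, α i ≠ 0 →
      ((α i) • MvPowerSeries.coeff α r =
          ∑ x ∈ (Finset.HasAntidiagonal.antidiagonal α).filter (fun x => x.2 i ≠ 0),
            MvPowerSeries.coeff x.1 r * MvPowerSeries.coeff x.2 (rs * chi i r)) ∧
      ((α i) • MvPowerSeries.coeff α r =
          ∑ x ∈ (Finset.HasAntidiagonal.antidiagonal α).filter (fun x => x.2 i ≠ 0),
            MvPowerSeries.coeff x.2 (chi i r * rs) * MvPowerSeries.coeff x.1 r) := by
  classical
  intro α hα hαi
  have hzero : ∀ γ : Fin p →₀ ℕ, γ i = 0 →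
      MvPowerSeries.coeff γ (rs * chi i r) = 0 := by
    intro γ hγ
    rw [MvPowerSeries.coeff_mul]
    refine Finset.sum_eq_zero fun x hx => ?_
    have hsum : x.1 + x.2 = γ := Finset.HasAntidiagonal.mem_antidiagonal.mp hx
    have hx2 : x.2 i = 0 := by
      have : x.1 i + x.2 i = γ i := by rw [← hsum]; rfl
      omega
    rw [coeff_chi, hx2, zero_smul, mul_zero]
  have hzero' : ∀ γ : Fin p →₀ ℕ, γ i = 0 →
      MvPowerSeries.coeff γ (chi i r * rs) = 0 := by
    intro γ hγ
    rw [MvPowerSeries.coeff_mul]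
    refine Finset.sum_eq_zero fun x hx => ?_
    have hsum : x.1 + x.2 = γ := Finset.HasAntidiagonal.mem_antidiagonal.mp hx
    have hx1 : x.1 i = 0 := by
      have : x.1 i + x.2 i = γ i := by rw [← hsum]; rfl
      omega
    rw [coeff_chi, hx1, zero_smul, zero_mul]
  constructor
  · -- first identity
    rw [Finset.sum_filter_of_ne (by
      intro x hx hne
      by_contra h
      exact hne (by rw [hzero x.2 h, mul_zero]))]
    rw [← MvPowerSeries.coeff_mul, ← mul_assoc, MvPowerSeries.coeff_mul]
    rw [Finset.sum_eq_single ((0 : Fin p →₀ ℕ), α)]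
    · rw [hr1 0 (hΔ.2 α hα 0 zero_le), MvPowerSeries.coeff_one,
        if_pos rfl, one_mul, coeff_chi]
    · intro x hx hne
      have hsum : x.1 + x.2 = α := Finset.HasAntidiagonal.mem_antidiagonal.mp hx
      have hx1 : x.1 ≠ 0 := by
        intro h0
        apply hne
        rw [Prod.ext_iff]
        exact ⟨h0, by rw [← hsum, h0, zero_add]⟩
      have hmem : x.1 ∈ Δ := hΔ.2 α hα x.1 (hsum ▸ le_self_add)
      rw [hr1 x.1 hmem, MvPowerSeries.coeff_one, if_neg hx1, zero_mul]
    · intro h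
      exact absurd (Finset.HasAntidiagonal.mem_antidiagonal.mpr (zero_add α)) h
  · -- second identity
    have hswap :
        ∑ x ∈ (Finset.HasAntidiagonal.antidiagonal α).filter (fun x => x.2 i ≠ 0),
            MvPowerSeries.coeff x.2 (chi i r * rs) * MvPowerSeries.coeff x.1 r
          = ∑ x ∈ (Finset.HasAntidiagonal.antidiagonal α).filter (fun x => x.1 i ≠ 0),
            MvPowerSeries.coeff x.1 (chi i r * rs) * MvPowerSeries.coeff x.2 r := by
      refine Finset.sum_nbij' (fun x => x.swap) (fun x => x.swap) ?_ ?_ ?_ ?_ ?_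
      · intro x hx
        simp only [Finset.mem_filter] at hx ⊢
        exact ⟨Finset.HasAntidiagonal.swap_mem_antidiagonal.mpr hx.1, hx.2⟩
      · intro x hx
        simp only [Finset.mem_filter] at hx ⊢
        exact ⟨Finset.HasAntidiagonal.swap_mem_antidiagonal.mpr hx.1, hx.2⟩
      · intro x _; rfl
      · intro x _; rfl
      · intro x _; rfl
    rw [hswap]
    rw [Finset.sum_filter_of_ne (by
      intro x hx hne
      by_contra h
      exact hne (by rw [hzero' x.1 h, zero_mul]))]
    rw [← MvPowerSeries.coeff_mul, mul_assoc, MvPowerSeries.coeff_mul]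
    rw [Finset.sum_eq_single (α, (0 : Fin p →₀ ℕ))]
    · rw [hr2 0 (hΔ.2 α hα 0 zero_le), MvPowerSeries.coeff_one,
        if_pos rfl, mul_one, coeff_chi]
    · intro x hx hne
      have hsum : x.1 + x.2 = α := Finset.HasAntidiagonal.mem_antidiagonal.mp hx
      have hx2 : x.2 ≠ 0 := by
        intro h0
        apply hne
        rw [Prod.ext_iff]
        exact ⟨by rw [← hsum, h0, add_zero], h0⟩
      have hmem : x.2 ∈ Δ := hΔ.2 α hα x.2 (hsum ▸ le_add_self)
      rw [hr2 x.2 hmem, MvPowerSeries.coeff_one, if_neg hx2, mul_zero]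
    · intro h
      exact absurd (Finset.HasAntidiagonal.mem_antidiagonal.mpr (add_zero α)) h
end

section
/- Assume ℚ ⊆ k. Let H^p(R;Δ) be the set of p-tuples (δ^1,...,δ^p) of elements of R[[s]]_{Δ,+} such that δ^i_α = 0 whenever α_i = 0 and χ^j_R(δ^i) − χ^i_R(δ^j) = [δ^i, δ^j] for all i,j. Then the sum map Σ : H^p(R;Δ) → R[[s]]_{Δ,+}, (δ^i) ↦ Σ_{i=1}^p δ^i, is injective. -/
lemma nsmul_cancel_aux {k R : Type*} [CommRing k] [Algebra ℚ k] [Ring R] [Algebra k R]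
    {n : ℕ} (hn : n ≠ 0) {x y : R} (h : n • x = n • y) : x = y := by
  have hk : (algebraMap ℚ k ((n : ℚ)⁻¹)) * (n : k) = 1 := by
    have : ((n : k)) = algebraMap ℚ k (n : ℚ) := by push_cast; simp
    rw [this, ← map_mul, inv_mul_cancel₀ (by exact_mod_cast hn), map_one]
  have hR : (algebraMap k R (algebraMap ℚ k ((n : ℚ)⁻¹))) * (n : R) = 1 := by
    have : ((n : R)) = algebraMap k R (n : k) := by simp
    rw [this, ← map_mul, hk, map_one]
  calc x = (algebraMap k R (algebraMap ℚ k ((n : ℚ)⁻¹)) * (n : R)) * x := by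
            rw [hR, one_mul]
    _ = algebraMap k R (algebraMap ℚ k ((n : ℚ)⁻¹)) * (n • x) := by
            rw [mul_assoc, nsmul_eq_mul]
    _ = algebraMap k R (algebraMap ℚ k ((n : ℚ)⁻¹)) * (n • y) := by rw [h]
    _ = (algebraMap k R (algebraMap ℚ k ((n : ℚ)⁻¹)) * (n : R)) * y := by
            rw [mul_assoc, nsmul_eq_mul]
    _ = y := by rw [hR, one_mul]

lemma key_formula {p : ℕ} {R : Type*} [Ring R] (Δ : Set (Fin p →₀ ℕ))
    (δ : Fin p → MvPowerSeries (Fin p) R)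
    (hδb : ∀ i j, EqOnD Δ (chi j (δ i) - chi i (δ j)) (δ i * δ j - δ j * δ i))
    (i : Fin p) (α : Fin p →₀ ℕ) (hα : α ∈ Δ) :
    (∑ j, α j) • MvPowerSeries.coeff α (δ i)
      = α i • MvPowerSeries.coeff α (∑ j, δ j)
        + (MvPowerSeries.coeff α (δ i * ∑ j, δ j)
            - MvPowerSeries.coeff α ((∑ j, δ j) * δ i)) := by
  have h : ∀ j : Fin p,
      α j • MvPowerSeries.coeff α (δ i) - α i • MvPowerSeries.coeff α (δ j)
        = MvPowerSeries.coeff α (δ i * δ j) - MvPowerSeries.coeff α (δ j * δ i) := by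
    intro j
    have := hδb i j α hα
    rwa [map_sub, map_sub,
      show MvPowerSeries.coeff α (chi j (δ i)) = α j • MvPowerSeries.coeff α (δ i) from rfl,
      show MvPowerSeries.coeff α (chi i (δ j)) = α i • MvPowerSeries.coeff α (δ j) from rfl]
      at this
  have hsum := Finset.sum_congr rfl (fun j (_ : j ∈ Finset.univ) => h j)
  rw [Finset.sum_sub_distrib, Finset.sum_sub_distrib, ← Finset.sum_smul,
    ← Finset.smul_sum] at hsum
  have hl : ∑ j, MvPowerSeries.coeff α (δ j) = MvPowerSeries.coeff α (∑ j, δ j) := by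
    rw [map_sum]
  have hr1 : ∑ j, MvPowerSeries.coeff α (δ i * δ j)
      = MvPowerSeries.coeff α (δ i * ∑ j, δ j) := by
    rw [Finset.mul_sum, map_sum]
  have hr2 : ∑ j, MvPowerSeries.coeff α (δ j * δ i)
      = MvPowerSeries.coeff α ((∑ j, δ j) * δ i) := by
    rw [Finset.sum_mul, map_sum]
  rw [hl, hr1, hr2] at hsum
  rw [← hsum]; abel

/-- Assume `ℚ ⊆ k`. The sum map `Σ : H^p(R;Δ) → R[[s]]_{Δ,+}` is injective, where
`H^p(R;Δ)` consists of the tuples `(δ^1,…,δ^p)` of series with zero constant term such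
that `δ^i_α = 0` whenever `α_i = 0` and `χ^j_R(δ^i) − χ^i_R(δ^j) = [δ^i,δ^j]`. -/
theorem sum_injective_on_H {p : ℕ} {k R : Type*} [CommRing k] [Algebra ℚ k] [Ring R]
    [Algebra k R]
    (Δ : Set (Fin p →₀ ℕ)) (hΔ : IsCoideal Δ)
    (δ η : Fin p → MvPowerSeries (Fin p) R)
    (hδ0 : ∀ i, MvPowerSeries.coeff 0 (δ i) = 0)
    (hη0 : ∀ i, MvPowerSeries.coeff 0 (η i) = 0)
    (hδa : ∀ i, ∀ α ∈ Δ, α i = 0 → MvPowerSeries.coeff α (δ i) = 0)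
    (hηa : ∀ i, ∀ α ∈ Δ, α i = 0 → MvPowerSeries.coeff α (η i) = 0)
    (hδb : ∀ i j, EqOnD Δ (chi j (δ i) - chi i (δ j)) (δ i * δ j - δ j * δ i))
    (hηb : ∀ i j, EqOnD Δ (chi j (η i) - chi i (η j)) (η i * η j - η j * η i))
    (hsum : EqOnD Δ (∑ i, δ i) (∑ i, η i)) :
    ∀ i, EqOnD Δ (δ i) (η i) := by
  -- zero constant terms of the sums
  have hσ0 : MvPowerSeries.coeff 0 (∑ j, δ j) = 0 := by
    rw [map_sum]; exact Finset.sum_eq_zero fun j _ => hδ0 j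
  have hτ0 : MvPowerSeries.coeff 0 (∑ j, η j) = 0 := by
    rw [map_sum]; exact Finset.sum_eq_zero fun j _ => hη0 j
  suffices h : ∀ n : ℕ, ∀ α : Fin p →₀ ℕ, (∑ j, α j) = n → α ∈ Δ →
      ∀ i, MvPowerSeries.coeff α (δ i) = MvPowerSeries.coeff α (η i) by
    intro i α hα
    exact h _ α rfl hα i
  intro n
  induction n using Nat.strong_induction_on with
  | _ n IH =>
    intro α hdeg hαΔ i
    rcases eq_or_ne n 0 with rfl | hn
    · have hα0 : α = 0 := by
        ext j
        have := Finset.sum_eq_zero_iff.mp hdeg j (Finset.mem_univ j)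
        simpa using this
      rw [hα0]
      rw [hδ0 i, hη0 i]
    · -- degree positive: use the key formula and cancellation
      apply nsmul_cancel_aux (k := k) hn
      have h1 := key_formula Δ δ hδb i α hαΔ
      have h2 := key_formula Δ η hηb i α hαΔ
      rw [hdeg] at h1 h2
      rw [h1, h2]
      have hστ : ∀ γ : Fin p →₀ ℕ, γ ∈ Δ →
          MvPowerSeries.coeff γ (∑ j, δ j) = MvPowerSeries.coeff γ (∑ j, η j) :=
        fun γ hγ => hsum γ hγ
      -- for pairs in the antidiagonal with nonzero complement, degree drops
      have hIH : ∀ β : Fin p →₀ ℕ, β ≤ α → (∑ j, β j) < n →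
          MvPowerSeries.coeff β (δ i) = MvPowerSeries.coeff β (η i) := by
        intro β hβ hlt
        exact IH _ hlt β rfl (hΔ.2 α hαΔ β hβ) i
      have hmul1 : MvPowerSeries.coeff α (δ i * ∑ j, δ j)
          = MvPowerSeries.coeff α (η i * ∑ j, η j) := by
        classical
        rw [MvPowerSeries.coeff_mul, MvPowerSeries.coeff_mul]
        refine Finset.sum_congr rfl ?_
        rintro ⟨β, γ⟩ hmem
        have hadd : β + γ = α := Finset.HasAntidiagonal.mem_antidiagonal.mp hmem
        rcases eq_or_ne γ 0 with rfl | hγ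
        · simp only [hσ0, hτ0, mul_zero]
        · have hβle : β ≤ α := hadd ▸ le_self_add
          have hγle : γ ≤ α := hadd ▸ le_add_self
          have hγpos : 0 < ∑ j, γ j := by
            rcases Finsupp.ne_iff.mp hγ with ⟨j, hj⟩
            refine Finset.sum_pos' (fun _ _ => Nat.zero_le _) ⟨j, Finset.mem_univ j, ?_⟩
            simpa using Nat.pos_of_ne_zero (by simpa using hj)
          have hdegβ : (∑ j, β j) < n := by
            have : (∑ j, β j) + (∑ j, γ j) = n := by
              rw [← hdeg, ← Finset.sum_add_distrib]
              exact Finset.sum_congr rfl fun j _ => by simp [← hadd]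
            omega
          rw [hIH β hβle hdegβ, hστ γ (hΔ.2 α hαΔ γ hγle)]
      have hmul2 : MvPowerSeries.coeff α ((∑ j, δ j) * δ i)
          = MvPowerSeries.coeff α ((∑ j, η j) * η i) := by
        classical
        rw [MvPowerSeries.coeff_mul, MvPowerSeries.coeff_mul]
        refine Finset.sum_congr rfl ?_
        rintro ⟨β, γ⟩ hmem
        have hadd : β + γ = α := Finset.HasAntidiagonal.mem_antidiagonal.mp hmem
        rcases eq_or_ne β 0 with rfl | hβ
        · simp only [hσ0, hτ0, zero_mul]
        · have hβle : β ≤ α := hadd ▸ le_self_add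
          have hγle : γ ≤ α := hadd ▸ le_add_self
          have hβpos : 0 < ∑ j, β j := by
            rcases Finsupp.ne_iff.mp hβ with ⟨j, hj⟩
            refine Finset.sum_pos' (fun _ _ => Nat.zero_le _) ⟨j, Finset.mem_univ j, ?_⟩
            simpa using Nat.pos_of_ne_zero (by simpa using hj)
          have hdegγ : (∑ j, γ j) < n := by
            have : (∑ j, β j) + (∑ j, γ j) = n := by
              rw [← hdeg, ← Finset.sum_add_distrib]
              exact Finset.sum_congr rfl fun j _ => by simp [← hadd]
            omega
          rw [hIH γ hγle hdegγ, hστ β (hΔ.2 α hαΔ β hβle)]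
      rw [hmul1, hmul2, hστ α hαΔ]
end

section
/- For a 1-variate Hasse–Schmidt derivation D = (Id, D_1, D_2, D_3, ...) of A over k, the first components of the logarithmic derivative ε(D) = D* χ_R(D) are: ε_1(D) = D_1, ε_2(D) = 2D_2 − D_1², and ε_3(D) = 3D_3 − 2D_1D_2 − D_2D_1 + D_1³; in particular all three of these operators are k-derivations of A. -/
/-- The Euler derivation `χ = s d/ds` on `R[[s]]`. -/
noncomputable def chi1 {R : Type*} [Ring R] (f : PowerSeries R) : PowerSeries R :=
  PowerSeries.mk fun n => n • PowerSeries.coeff (R := R) n f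

/-- For a 1-variate Hasse–Schmidt derivation `D = (Id, D_1, D_2, D_3, …)` of length
`m ≥ 3` with inverse `D* = Ds`, the first components of `ε(D) = D* χ_R(D)` are
`ε_1(D) = D_1`, `ε_2(D) = 2D_2 − D_1²`,
`ε_3(D) = 3D_3 − 2D_1D_2 − D_2D_1 + D_1³`, and all three are `k`-derivations of `A`. -/
theorem eps_low_components {k A : Type*} [CommRing k] [CommRing A] [Algebra k A]
    (m : ℕ) (hm : 3 ≤ m)
    (D Ds : PowerSeries (Module.End k A))
    (hD0 : PowerSeries.coeff (R := Module.End k A) 0 D = 1)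
    (hDs0 : PowerSeries.coeff (R := Module.End k A) 0 Ds = 1)
    (hLeib : ∀ n ≤ m, ∀ x y : A,
      PowerSeries.coeff (R := Module.End k A) n D (x * y) =
        ∑ z ∈ Finset.HasAntidiagonal.antidiagonal n,
          (PowerSeries.coeff (R := Module.End k A) z.1 D x) *
            (PowerSeries.coeff (R := Module.End k A) z.2 D y))
    (hinv1 : ∀ n ≤ m, PowerSeries.coeff (R := Module.End k A) n (D * Ds) =
      PowerSeries.coeff (R := Module.End k A) n 1)
    (hinv2 : ∀ n ≤ m, PowerSeries.coeff (R := Module.End k A) n (Ds * D) =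
      PowerSeries.coeff (R := Module.End k A) n 1) :
    (PowerSeries.coeff (R := Module.End k A) 1 (Ds * chi1 D) =
        PowerSeries.coeff (R := Module.End k A) 1 D) ∧
    (PowerSeries.coeff (R := Module.End k A) 2 (Ds * chi1 D) =
        2 • PowerSeries.coeff (R := Module.End k A) 2 D -
          PowerSeries.coeff (R := Module.End k A) 1 D *
            PowerSeries.coeff (R := Module.End k A) 1 D) ∧
    (PowerSeries.coeff (R := Module.End k A) 3 (Ds * chi1 D) =
        3 • PowerSeries.coeff (R := Module.End k A) 3 D -
          2 • (PowerSeries.coeff (R := Module.End k A) 1 D *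
            PowerSeries.coeff (R := Module.End k A) 2 D) -
          PowerSeries.coeff (R := Module.End k A) 2 D *
            PowerSeries.coeff (R := Module.End k A) 1 D +
          PowerSeries.coeff (R := Module.End k A) 1 D *
            PowerSeries.coeff (R := Module.End k A) 1 D *
            PowerSeries.coeff (R := Module.End k A) 1 D) ∧
    (∀ n : ℕ, n = 1 ∨ n = 2 ∨ n = 3 → ∀ x y : A,
        PowerSeries.coeff (R := Module.End k A) n (Ds * chi1 D) (x * y) =
          x * PowerSeries.coeff (R := Module.End k A) n (Ds * chi1 D) y +
            PowerSeries.coeff (R := Module.End k A) n (Ds * chi1 D) x * y) := by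
  -- coefficient of the product
  have hco : ∀ n : ℕ, PowerSeries.coeff (R := Module.End k A) n (Ds * chi1 D) =
      ∑ i ∈ Finset.range (n + 1),
        PowerSeries.coeff (R := Module.End k A) i Ds *
          ((n - i) • PowerSeries.coeff (R := Module.End k A) (n - i) D) := by
    intro n
    rw [PowerSeries.coeff_mul, Finset.Nat.sum_antidiagonal_eq_sum_range_succ_mk]
    simp [chi1, PowerSeries.coeff_mk]
  -- inverse coefficients
  have hE1 : PowerSeries.coeff (R := Module.End k A) 1 Ds =
      - PowerSeries.coeff (R := Module.End k A) 1 D := by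
    have h := hinv2 1 (by omega)
    rw [PowerSeries.coeff_mul, Finset.Nat.sum_antidiagonal_eq_sum_range_succ_mk] at h
    simp [Finset.sum_range_succ, hDs0, hD0, PowerSeries.coeff_one] at h
    exact eq_neg_of_add_eq_zero_right h
  have hE2 : PowerSeries.coeff (R := Module.End k A) 2 Ds =
      PowerSeries.coeff (R := Module.End k A) 1 D * PowerSeries.coeff (R := Module.End k A) 1 D -
        PowerSeries.coeff (R := Module.End k A) 2 D := by
    have h := hinv2 2 (by omega)
    rw [PowerSeries.coeff_mul, Finset.Nat.sum_antidiagonal_eq_sum_range_succ_mk] at h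
    simp [Finset.sum_range_succ, hDs0, hD0, PowerSeries.coeff_one, hE1] at h
    have h2 := eq_neg_of_add_eq_zero_right h
    rw [h2]; noncomm_ring
    simp only [smul_mul_assoc]; abel
  -- the three component formulas
  have hc1 : PowerSeries.coeff (R := Module.End k A) 1 (Ds * chi1 D) =
      PowerSeries.coeff (R := Module.End k A) 1 D := by
    rw [hco]
    simp [Finset.sum_range_succ, hDs0]
  have hc2 : PowerSeries.coeff (R := Module.End k A) 2 (Ds * chi1 D) =
      2 • PowerSeries.coeff (R := Module.End k A) 2 D -
        PowerSeries.coeff (R := Module.End k A) 1 D * PowerSeries.coeff (R := Module.End k A) 1 D := by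
    rw [hco]
    simp [Finset.sum_range_succ, hDs0, hE1, nsmul_eq_mul]
    push_cast
    noncomm_ring
    simp only [smul_mul_assoc]
  have hc3 : PowerSeries.coeff (R := Module.End k A) 3 (Ds * chi1 D) =
      3 • PowerSeries.coeff (R := Module.End k A) 3 D -
        2 • (PowerSeries.coeff (R := Module.End k A) 1 D * PowerSeries.coeff (R := Module.End k A) 2 D) -
        PowerSeries.coeff (R := Module.End k A) 2 D * PowerSeries.coeff (R := Module.End k A) 1 D +
        PowerSeries.coeff (R := Module.End k A) 1 D * PowerSeries.coeff (R := Module.End k A) 1 D *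
          PowerSeries.coeff (R := Module.End k A) 1 D := by
    rw [hco]
    simp [Finset.sum_range_succ, hDs0, hE1, hE2, nsmul_eq_mul]
    push_cast
    noncomm_ring
    simp only [smul_mul_assoc]; abel
  -- Leibniz rules for components
  have hL0 : ∀ x : A, PowerSeries.coeff (R := Module.End k A) 0 D x = x := by
    intro x; rw [hD0]; rfl
  have hL0' : ∀ x : A, PowerSeries.constantCoeff (R := Module.End k A) D x = x := by
    intro x; rw [← PowerSeries.coeff_zero_eq_constantCoeff]; exact hL0 x
  have hL1 : ∀ x y : A, PowerSeries.coeff (R := Module.End k A) 1 D (x * y) =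
      PowerSeries.coeff (R := Module.End k A) 1 D x * y +
        x * PowerSeries.coeff (R := Module.End k A) 1 D y := by
    intro x y
    have h := hLeib 1 (by omega) x y
    rw [Finset.Nat.sum_antidiagonal_eq_sum_range_succ_mk] at h
    simp [Finset.sum_range_succ, hL0, hL0'] at h
    rw [h]; ring
  have hL2 : ∀ x y : A, PowerSeries.coeff (R := Module.End k A) 2 D (x * y) =
      PowerSeries.coeff (R := Module.End k A) 2 D x * y +
        PowerSeries.coeff (R := Module.End k A) 1 D x * PowerSeries.coeff (R := Module.End k A) 1 D y +
        x * PowerSeries.coeff (R := Module.End k A) 2 D y := by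
    intro x y
    have h := hLeib 2 (by omega) x y
    rw [Finset.Nat.sum_antidiagonal_eq_sum_range_succ_mk] at h
    simp [Finset.sum_range_succ, hL0, hL0'] at h
    rw [h]; ring
  have hL3 : ∀ x y : A, PowerSeries.coeff (R := Module.End k A) 3 D (x * y) =
      PowerSeries.coeff (R := Module.End k A) 3 D x * y +
        PowerSeries.coeff (R := Module.End k A) 2 D x * PowerSeries.coeff (R := Module.End k A) 1 D y +
        PowerSeries.coeff (R := Module.End k A) 1 D x * PowerSeries.coeff (R := Module.End k A) 2 D y +
        x * PowerSeries.coeff (R := Module.End k A) 3 D y := by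
    intro x y
    have h := hLeib 3 (by omega) x y
    rw [Finset.Nat.sum_antidiagonal_eq_sum_range_succ_mk] at h
    simp [Finset.sum_range_succ, hL0, hL0'] at h
    rw [h]; ring
  refine ⟨hc1, hc2, hc3, ?_⟩
  rintro n (rfl | rfl | rfl) x y
  · rw [hc1, hL1]; ring
  · rw [hc2]
    simp only [LinearMap.sub_apply, LinearMap.smul_apply, Module.End.mul_apply, map_add, hL2, hL1]
    simp only [nsmul_eq_mul]
    push_cast
    ring
  · rw [hc3]
    simp only [LinearMap.sub_apply, LinearMap.add_apply, LinearMap.smul_apply,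
      Module.End.mul_apply, map_add, hL3, hL2, hL1]
    simp only [nsmul_eq_mul]
    push_cast
    ring
end

section
/- The map ξ : Der_k(A)[[s]]_{Δ,+} → HS^{p+1}_k(A; Δ × {0,1}) sending δ = Σ_{|α|>0} δ_α s^α to 1 + Σ_{|α|>0} δ_α s^α τ is a well-defined injective group homomorphism from the additive group of zero-constant-term derivation-valued series to the group of (p+1)-variate Hasse–Schmidt derivations with respect to the co-ideal Δ × {0,1}. -/
open scoped Classical

lemma antidiag_one' : Finset.HasAntidiagonal.antidiagonal (1:ℕ) = {(0,1),(1,0)} := by decide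

lemma sum_if_left' {p : ℕ} {M : Type*} [AddCommMonoid M] (α : Fin p →₀ ℕ)
    (g : (Fin p →₀ ℕ) → M) :
    ∑ y ∈ Finset.HasAntidiagonal.antidiagonal α, (if y.1 = 0 then g y.2 else 0) = g α := by
  rw [Finset.sum_eq_single_of_mem ((0 : Fin p →₀ ℕ), α)
    (by simp [Finset.HasAntidiagonal.mem_antidiagonal])]
  · simp
  · rintro ⟨y1, y2⟩ hmem hne
    rw [Finset.HasAntidiagonal.mem_antidiagonal] at hmem
    simp only
    split_ifs with h
    · subst h; rw [zero_add] at hmem; subst hmem; exact absurd rfl hne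
    · rfl

lemma sum_if_right' {p : ℕ} {M : Type*} [AddCommMonoid M] (α : Fin p →₀ ℕ)
    (g : (Fin p →₀ ℕ) → M) :
    ∑ y ∈ Finset.HasAntidiagonal.antidiagonal α, (if y.2 = 0 then g y.1 else 0) = g α := by
  rw [Finset.sum_eq_single_of_mem (α, (0 : Fin p →₀ ℕ))
    (by simp [Finset.HasAntidiagonal.mem_antidiagonal])]
  · simp
  · rintro ⟨y1, y2⟩ hmem hne
    rw [Finset.HasAntidiagonal.mem_antidiagonal] at hmem
    simp only
    split_ifs with h
    · subst h; rw [add_zero] at hmem; subst hmem; exact absurd rfl hne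
    · rfl

lemma sum_if_both' {p : ℕ} {M : Type*} [AddCommMonoid M] (α : Fin p →₀ ℕ)
    (c : M) :
    ∑ y ∈ Finset.HasAntidiagonal.antidiagonal α, (if y.1 = 0 ∧ y.2 = 0 then c else 0)
      = if α = 0 then c else 0 := by
  by_cases hα : α = 0
  · subst hα; simp
  · rw [if_neg hα]
    apply Finset.sum_eq_zero
    rintro ⟨y1, y2⟩ hmem
    rw [Finset.HasAntidiagonal.mem_antidiagonal] at hmem
    split_ifs with h
    · exact absurd (by rw [← hmem, h.1, h.2, add_zero]) hα
    · rfl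


/-- The map `ξ` sending `δ = Σ_{|α|>0} δ_α s^α` to `1 + Σ δ_α s^α τ`, as a family of
endomorphisms indexed by `(α, j) ∈ ℕ^p × ℕ` (with `j` the `τ`-degree). -/
noncomputable def xiF {p : ℕ} {k A : Type*} [CommRing k] [CommRing A] [Algebra k A]
    (δ : (Fin p →₀ ℕ) → Module.End k A) : (Fin p →₀ ℕ) × ℕ → Module.End k A :=
  fun x => if x.2 = 0 then (if x.1 = 0 then 1 else 0)
    else if x.2 = 1 then δ x.1 else 0

/-- The convolution product of families indexed by `(Fin p →₀ ℕ) × ℕ`. -/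
noncomputable def conv2 {p : ℕ} {k A : Type*} [CommRing k] [CommRing A] [Algebra k A]
    (F G : (Fin p →₀ ℕ) × ℕ → Module.End k A) (x : (Fin p →₀ ℕ) × ℕ) :
    Module.End k A :=
  ∑ y ∈ Finset.HasAntidiagonal.antidiagonal x.1, ∑ z ∈ Finset.HasAntidiagonal.antidiagonal x.2,
    F (y.1, z.1) * G (y.2, z.2)

/-- `ξ : Der_k(A)[[s]]_{Δ,+} → HS^{p+1}_k(A; Δ×{0,1})`, `δ ↦ 1 + δ τ`, is a well-defined
injective group homomorphism (from the additive group of derivation-valued series with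
zero constant term to the group of `(p+1)`-variate HS-derivations on `Δ × {0,1}`). -/
theorem xi_injective_group_hom {p : ℕ} {k A : Type*} [CommRing k] [CommRing A]
    [Algebra k A]
    (Δ : Set (Fin p →₀ ℕ)) (hΔ : IsCoideal Δ)
    (δ η : (Fin p →₀ ℕ) → Module.End k A)
    (hδ0 : δ 0 = 0) (hη0 : η 0 = 0)
    (hδder : ∀ α ∈ Δ, ∀ x y : A, δ α (x * y) = x * δ α y + δ α x * y)
    (hηder : ∀ α ∈ Δ, ∀ x y : A, η α (x * y) = x * η α y + η α x * y) :
    -- ξ(δ) is a Hasse–Schmidt derivation on the co-ideal Δ × {0,1}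
    (xiF δ (0, 0) = 1 ∧
      ∀ x : (Fin p →₀ ℕ) × ℕ, x.1 ∈ Δ → x.2 ≤ 1 → ∀ a b : A,
        xiF δ x (a * b) =
          ∑ y ∈ Finset.HasAntidiagonal.antidiagonal x.1, ∑ z ∈ Finset.HasAntidiagonal.antidiagonal x.2,
            (xiF δ (y.1, z.1) a) * (xiF δ (y.2, z.2) b)) ∧
    -- ξ is a group homomorphism: ξ(δ + η) = ξ(δ) ∘ ξ(η)
    (∀ x : (Fin p →₀ ℕ) × ℕ, x.1 ∈ Δ → x.2 ≤ 1 →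
      conv2 (xiF δ) (xiF η) x = xiF (fun α => δ α + η α) x) ∧
    -- ξ is injective
    ((∀ x : (Fin p →₀ ℕ) × ℕ, x.1 ∈ Δ → x.2 ≤ 1 → xiF δ x = xiF η x) →
      ∀ α ∈ Δ, δ α = η α) := by
  refine ⟨⟨by simp [xiF], ?_⟩, ?_, ?_⟩
  · rintro ⟨α, j⟩ hα hj a b
    interval_cases j
    · -- j = 0
      simp only [xiF, Finset.HasAntidiagonal.antidiagonal_zero, Finset.sum_singleton, reduceIte]
      have this1 : ∀ y ∈ Finset.HasAntidiagonal.antidiagonal α,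
          ((if y.1 = 0 then (1 : Module.End k A) else 0) a) *
            ((if y.2 = 0 then (1 : Module.End k A) else 0) b)
          = (if y.1 = 0 ∧ y.2 = 0 then a * b else 0) := by
        intro y _
        split_ifs <;>
          simp_all [Module.End.one_apply]
      rw [Finset.sum_congr rfl this1, sum_if_both']
      split_ifs with h
      · simp [Module.End.one_apply]
      · simp
    · -- j = 1
      simp only [xiF, antidiag_one', if_neg (show (1:ℕ) ≠ 0 by decide),
        Finset.sum_pair (show ((0:ℕ),(1:ℕ)) ≠ ((1:ℕ),(0:ℕ)) by decide), reduceIte]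
      have step : ∀ y ∈ Finset.HasAntidiagonal.antidiagonal α,
          ((if y.1 = 0 then (1 : Module.End k A) else 0) a) * (δ y.2) b +
            (δ y.1) a * ((if y.2 = 0 then (1 : Module.End k A) else 0) b)
          = (if y.1 = 0 then a * δ y.2 b else 0) +
            (if y.2 = 0 then δ y.1 a * b else 0) := by
        intro y _
        split_ifs <;> simp [Module.End.one_apply]
      rw [Finset.sum_congr rfl step, Finset.sum_add_distrib,
        sum_if_left' α (fun β => a * δ β b), sum_if_right' α (fun β => δ β a * b)]
      exact hδder α hα a b
  · rintro ⟨α, j⟩ hα hj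
    interval_cases j
    · simp only [conv2, xiF, Finset.HasAntidiagonal.antidiagonal_zero, Finset.sum_singleton, reduceIte]
      have this1 : ∀ y ∈ Finset.HasAntidiagonal.antidiagonal α,
          (if y.1 = 0 then (1 : Module.End k A) else 0) *
            (if y.2 = 0 then (1 : Module.End k A) else 0)
          = (if y.1 = 0 ∧ y.2 = 0 then (1 : Module.End k A) else 0) := by
        intro y _
        split_ifs <;> simp_all
      rw [Finset.sum_congr rfl this1, sum_if_both']
    · simp only [conv2, xiF, antidiag_one', if_neg (show (1:ℕ) ≠ 0 by decide),
        Finset.sum_pair (show ((0:ℕ),(1:ℕ)) ≠ ((1:ℕ),(0:ℕ)) by decide), reduceIte]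
      have step : ∀ y ∈ Finset.HasAntidiagonal.antidiagonal α,
          (if y.1 = 0 then (1 : Module.End k A) else 0) * η y.2 +
            δ y.1 * (if y.2 = 0 then (1 : Module.End k A) else 0)
          = (if y.1 = 0 then η y.2 else 0) +
            (if y.2 = 0 then δ y.1 else 0) := by
        intro y _
        split_ifs <;> simp
      rw [Finset.sum_congr rfl step, Finset.sum_add_distrib,
        sum_if_left' α η, sum_if_right' α δ]
      exact add_comm _ _
  · intro h α hα
    have := h (α, 1) hα le_rfl
    simpa [xiF] using this
end

section
/- Let σ : A[[s]]_Δ → A[[s,τ]]_{Δ×{0,1}} be the substitution map with constant coefficients determined by s_i ↦ s_i + s_i τ. Then for any r ∈ U^p(R;Δ), the identity r* (σ • r) = ξ(ε(r)) holds in U^{p+1}(R; Δ×{0,1}), where ε(r) = r* χ_R(r) is the Euler logarithmic derivative and ξ(δ) = 1 + δ τ. Equivalently, σ • r = r + χ_R(r) τ. -/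
open scoped Classical

/-- The Euler derivation `χ`, acting coefficientwise by `|α|`. -/
noncomputable def chiE {p : ℕ} {R : Type*} [Ring R]
    (f : MvPowerSeries (Fin p) R) : MvPowerSeries (Fin p) R :=
  fun α => (∑ i, α i) • MvPowerSeries.coeff α f

/-- The action `σ • r` of the substitution map `σ : s_i ↦ s_i + s_i τ` on
`r = Σ r_α s^α`: since `σ(s^α) = s^α (1+τ)^{|α|}`, the coefficient of `s^β τ^j` is
`C(|β|, j) r_β`. -/
noncomputable def sigmaAct {p : ℕ} {R : Type*} [Ring R]
    (r : MvPowerSeries (Fin p) R) : (Fin p →₀ ℕ) × ℕ → R :=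
  fun x => (Nat.choose (∑ i, x.1 i) x.2) • MvPowerSeries.coeff x.1 r

/-- The inclusion `ι : R[[s]]_Δ → R[[s,τ]]_{Δ×{0,1}}`. -/
noncomputable def iotaAct {p : ℕ} {R : Type*} [Ring R]
    (r : MvPowerSeries (Fin p) R) : (Fin p →₀ ℕ) × ℕ → R :=
  fun x => if x.2 = 0 then MvPowerSeries.coeff x.1 r else 0

/-- For `r ∈ U^p(R;Δ)` with inverse `rs`, in `R[[s,τ]]_{Δ×{0,1}}` one has
`σ • r = r + χ_R(r) τ` and `r* (σ • r) = ξ(ε(r))`, where `ε(r) = r* χ_R(r)` and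
`ξ(δ) = 1 + δ τ`. -/
theorem sigma_bullet_eq_xi_eps {p : ℕ} {R : Type*} [Ring R]
    (Δ : Set (Fin p →₀ ℕ)) (hΔ : IsCoideal Δ)
    (r rs : MvPowerSeries (Fin p) R)
    (hr0 : MvPowerSeries.coeff 0 r = 1)
    (hr1 : EqOnD Δ (r * rs) 1) (hr2 : EqOnD Δ (rs * r) 1) :
    ∀ x : (Fin p →₀ ℕ) × ℕ, x.1 ∈ Δ → x.2 ≤ 1 →
      -- σ • r = r + χ_R(r) τ
      (sigmaAct r x =
        (if x.2 = 0 then MvPowerSeries.coeff x.1 r else 0) +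
          (if x.2 = 1 then (∑ i, x.1 i) • MvPowerSeries.coeff x.1 r else 0)) ∧
      -- r* (σ • r) = ξ(ε(r))
      ((∑ y ∈ Finset.HasAntidiagonal.antidiagonal x.1, ∑ z ∈ Finset.HasAntidiagonal.antidiagonal x.2,
          iotaAct rs (y.1, z.1) * sigmaAct r (y.2, z.2)) =
        (if x.2 = 0 then (if x.1 = 0 then (1 : R) else 0)
          else MvPowerSeries.coeff x.1 (rs * chiE r))) := by
  rintro ⟨x1, x2⟩ hx1 hx2
  interval_cases x2
  · refine ⟨by simp [sigmaAct], ?_⟩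
    simp only [Finset.Nat.antidiagonal_zero, Finset.sum_singleton, if_pos rfl]
    have h : (∑ y ∈ Finset.HasAntidiagonal.antidiagonal x1,
        iotaAct rs (y.1, 0) * sigmaAct r (y.2, 0)) =
        MvPowerSeries.coeff x1 (rs * r) := by
      rw [MvPowerSeries.coeff_mul]
      exact Finset.sum_congr rfl fun y _ => by simp [iotaAct, sigmaAct]
    rw [h, hr2 x1 hx1, MvPowerSeries.coeff_one]; simp
  · refine ⟨by simp [sigmaAct, Nat.choose_one_right], ?_⟩
    have had : Finset.HasAntidiagonal.antidiagonal (1 : ℕ) = {(0,1),(1,0)} := by decide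
    simp only [had, Finset.sum_insert
      (by decide : ((0:ℕ),(1:ℕ)) ∉ ({(1,0)} : Finset (ℕ×ℕ))),
      Finset.sum_singleton, if_neg (one_ne_zero)]
    have h10 : ∀ y ∈ Finset.HasAntidiagonal.antidiagonal x1,
        iotaAct rs (y.1, 1) * sigmaAct r (y.2, 0) = 0 := by
      intro y _; simp [iotaAct]
    rw [Finset.sum_congr rfl fun y hy => by rw [h10 y hy, add_zero]]
    rw [MvPowerSeries.coeff_mul]
    refine Finset.sum_congr rfl fun y _ => ?_
    simp [iotaAct, sigmaAct, chiE, MvPowerSeries.coeff_apply, Nat.choose_one_right]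
end

section
/- Let φ : A[[s]]_Δ → A[[t]]_∇ be a substitution map and D ∈ HS^p_k(A;Δ) a Hasse–Schmidt derivation. Then φ • D := Σ_{α∈Δ} φ(s^α) D_α is a (q,∇)-variate Hasse–Schmidt derivation of A over k, and Φ_{φ•D} = φ ∘ Φ_D as k-algebra maps A → A[[t]]_∇. -/
open scoped Classical

def IsHS {p : ℕ} {k A : Type*} [CommRing k] [CommRing A] [Algebra k A]
    (Δ : Set (Fin p →₀ ℕ)) (D : MvPowerSeries (Fin p) (Module.End k A)) : Prop :=
  MvPowerSeries.coeff 0 D = 1 ∧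
    ∀ α ∈ Δ, ∀ x y : A,
      MvPowerSeries.coeff α D (x * y) =
        ∑ z ∈ Finset.HasAntidiagonal.antidiagonal α,
          (MvPowerSeries.coeff z.1 D x) *
            (MvPowerSeries.coeff z.2 D y)

/-- The finite set of exponents `α ∈ ℕ^p` with `|α| ≤ N`. -/
noncomputable def expBdd (p N : ℕ) : Finset (Fin p →₀ ℕ) :=
  (Finset.Iic (Finsupp.equivFunOnFinite.symm (fun _ : Fin p => N))).filter
    (fun α => ∑ i, α i ≤ N)

/-- `φ • D`, the action of the substitution map `φ` on the HS-derivation `D`: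
`(φ • D)_e = Σ_{|α| ≤ |e|} C_e(φ,α) D_α` where `C_e(φ,α)` is the coefficient of `t^e`
in `φ(s^α)`, acting on `End_k(A)` by left multiplication. -/
noncomputable def substAct {p q : ℕ} {k A : Type*} [CommRing k] [CommRing A]
    [Algebra k A]
    (φ : MvPowerSeries (Fin p) A →ₐ[A] MvPowerSeries (Fin q) A)
    (D : MvPowerSeries (Fin p) (Module.End k A)) :
    MvPowerSeries (Fin q) (Module.End k A) :=
  fun e => ∑ α ∈ expBdd p (∑ j, e j),
    LinearMap.mulLeft k
        (MvPowerSeries.coeff e (φ (MvPowerSeries.monomial α (1 : A)))) *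
      MvPowerSeries.coeff α D

lemma expBdd_zero (p : ℕ) : expBdd p 0 = {0} := by
  ext α
  simp only [expBdd, Finset.mem_filter, Finset.mem_Iic, Finset.mem_singleton]
  constructor
  · rintro ⟨-, h2⟩
    ext i
    have := Finset.sum_eq_zero_iff.mp (Nat.le_zero.mp h2) i (Finset.mem_univ i)
    simpa using this
  · rintro rfl
    refine ⟨?_, by simp⟩
    intro i
    simp

lemma substAct_key {p q : ℕ} {k A : Type*} [CommRing k] [CommRing A] [Algebra k A]
    (φ : MvPowerSeries (Fin p) A →ₐ[A] MvPowerSeries (Fin q) A)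
    (hcont : ∀ (f : MvPowerSeries (Fin p) A) (e : Fin q →₀ ℕ),
      MvPowerSeries.coeff e (φ f) =
        ∑ α ∈ expBdd p (∑ j, e j),
          MvPowerSeries.coeff α f *
            MvPowerSeries.coeff e (φ (MvPowerSeries.monomial α (1 : A))))
    (D : MvPowerSeries (Fin p) (Module.End k A)) (a : A) (e : Fin q →₀ ℕ) :
    MvPowerSeries.coeff e (substAct φ D) a =
      MvPowerSeries.coeff e
        (φ (show MvPowerSeries (Fin p) A from
          fun α => MvPowerSeries.coeff α D a)) := by
  rw [hcont]
  have h1 : MvPowerSeries.coeff e (substAct φ D) a =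
      ∑ α ∈ expBdd p (∑ j, e j),
        MvPowerSeries.coeff e (φ (MvPowerSeries.monomial α (1 : A))) *
          (MvPowerSeries.coeff α D a) := by
    show (substAct φ D e) a = _
    rw [substAct]
    rw [LinearMap.sum_apply]
    refine Finset.sum_congr rfl fun α _ => ?_
    rw [Module.End.mul_apply, LinearMap.mulLeft_apply]
  rw [h1]
  refine Finset.sum_congr rfl fun α _ => ?_
  rw [mul_comm]
  rfl

/-- Let `φ : A[[s]]_Δ → A[[t]]_∇` be a substitution map (an `A`-algebra map with
`ord φ(s_i) ≥ 1`, continuous and compatible with the truncations) and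
`D ∈ HS^p_k(A;Δ)`. Then `φ • D ∈ HS^q_k(A;∇)` and `Φ_{φ•D} = φ ∘ Φ_D`. -/
theorem substAct_isHS {p q : ℕ} {k A : Type*} [CommRing k] [CommRing A] [Algebra k A]
    (Δ : Set (Fin p →₀ ℕ)) (nab : Set (Fin q →₀ ℕ))
    (hΔ : IsCoideal Δ) (hnab : IsCoideal nab)
    (φ : MvPowerSeries (Fin p) A →ₐ[A] MvPowerSeries (Fin q) A)
    (hord : ∀ i : Fin p,
      MvPowerSeries.constantCoeff (φ (MvPowerSeries.X i)) = 0)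
    (hcont : ∀ (f : MvPowerSeries (Fin p) A) (e : Fin q →₀ ℕ),
      MvPowerSeries.coeff e (φ f) =
        ∑ α ∈ expBdd p (∑ j, e j),
          MvPowerSeries.coeff α f *
            MvPowerSeries.coeff e (φ (MvPowerSeries.monomial α (1 : A))))
    (hcong : ∀ f g, EqOnD Δ f g → EqOnD nab (φ f) (φ g))
    (D : MvPowerSeries (Fin p) (Module.End k A)) (hD : IsHS Δ D) :
    IsHS nab (substAct φ D) ∧
      ∀ (a : A), ∀ e ∈ nab,
        MvPowerSeries.coeff e (substAct φ D) a =
          MvPowerSeries.coeff e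
            (φ (show MvPowerSeries (Fin p) A from
              fun α => MvPowerSeries.coeff α D a)) := by
  have key := substAct_key φ hcont D
  refine ⟨⟨?_, ?_⟩, fun a e _ => key a e⟩
  · -- coefficient at 0 is 1
    show substAct φ D 0 = 1
    rw [substAct]
    have h0 : (∑ j, (0 : Fin q →₀ ℕ) j) = 0 := by simp
    rw [h0, expBdd_zero, Finset.sum_singleton]
    have : MvPowerSeries.monomial (0 : Fin p →₀ ℕ) (1 : A) = 1 := by
      simp
    rw [this, map_one]
    have hc : MvPowerSeries.coeff (0 : Fin q →₀ ℕ)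
        (1 : MvPowerSeries (Fin q) A) = 1 := by simp
    rw [hc]
    have hD0 : MvPowerSeries.coeff (0 : Fin p →₀ ℕ) D = 1 := hD.1
    rw [hD0, mul_one, LinearMap.mulLeft_one]
    rfl
  · intro e he x y
    set ΦD : A → MvPowerSeries (Fin p) A :=
      fun a α => MvPowerSeries.coeff α D a with hΦD
    have heq : EqOnD Δ (ΦD (x * y)) (ΦD x * ΦD y) := by
      intro α hα
      have := hD.2 α hα x y
      rw [MvPowerSeries.coeff_mul]
      calc MvPowerSeries.coeff α (ΦD (x * y))
          = MvPowerSeries.coeff α D (x * y) := rfl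
        _ = _ := by
            rw [this]
            rfl
    have h2 := hcong _ _ heq e he
    rw [key (x * y) e]
    calc MvPowerSeries.coeff e (φ (ΦD (x * y)))
        = MvPowerSeries.coeff e (φ (ΦD x * ΦD y)) := h2
      _ = MvPowerSeries.coeff e (φ (ΦD x) * φ (ΦD y)) := by rw [map_mul]
      _ = ∑ z ∈ Finset.HasAntidiagonal.antidiagonal e,
            MvPowerSeries.coeff z.1 (φ (ΦD x)) *
              MvPowerSeries.coeff z.2 (φ (ΦD y)) := MvPowerSeries.coeff_mul e _ _
      _ = _ := by
            refine Finset.sum_congr rfl fun z _ => ?_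
            rw [← key x z.1, ← key y z.2]
end
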